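/- Let C be the n×n upper-triangular matrix with entries C_{ab} = ∏_{c=1}^{a-1}(z_b - z_c) for a ≤ b and C_{ab} = 0 for a > b, where z_1,...,z_n are distinct complex numbers. Then C is invertible with inverse (C^{-1})_{ab} = ∏_{c=1, c≠a}^{b} (z_a - z_c)^{-1} for a ≤ b and 0 for a > b, and C Z C^{-1} = Z + Ẑ, where Z = diag(z_1,...,z_n) and Ẑ is the matrix with entries Ẑ_{ab} = δ_{a,b-1}. -/

import Mathlib

open Polynomial Finset

section aux

variable {F : Type*} [Field F] {ι : Type*} [DecidableEq ι] {s : Finset ι} {v : ι → F}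

lemma lc_basisDivisor {x y : F} (_h : x ≠ y) :
    (Lagrange.basisDivisor x y).leadingCoeff = (x - y)⁻¹ := by
  unfold Lagrange.basisDivisor
  rw [leadingCoeff_mul, leadingCoeff_C, (monic_X_sub_C y).leadingCoeff, mul_one]

lemma coeff_basis (hvs : Set.InjOn v s) {i : ι} (hi : i ∈ s) :
    (Lagrange.basis s v i).coeff (s.card - 1) = ∏ j ∈ s.erase i, (v i - v j)⁻¹ := by
  rw [← Lagrange.natDegree_basis hvs hi, Polynomial.coeff_natDegree, Lagrange.basis,
    Polynomial.leadingCoeff_prod]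
  refine Finset.prod_congr rfl fun j hj => ?_
  exact lc_basisDivisor (hvs.ne hi (Finset.mem_of_mem_erase hj) (Finset.ne_of_mem_erase hj).symm)

lemma coeff_interp (hvs : Set.InjOn v s) (r : ι → F) :
    (Lagrange.interpolate s v r).coeff (s.card - 1)
      = ∑ i ∈ s, r i * ∏ j ∈ s.erase i, (v i - v j)⁻¹ := by
  rw [Lagrange.interpolate_apply, Polynomial.finset_sum_coeff]
  exact Finset.sum_congr rfl fun i hi => by
    rw [Polynomial.coeff_C_mul, coeff_basis hvs hi]

lemma sum_one (hvs : Set.InjOn v s) (hs : s.Nonempty) :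
    ∑ i ∈ s, ∏ j ∈ s.erase i, (v i - v j)⁻¹ = if s.card = 1 then 1 else 0 := by
  have h := coeff_interp hvs (1 : ι → F)
  rw [Lagrange.interpolate_one hvs hs, Polynomial.coeff_one] at h
  simp only [Pi.one_apply, one_mul] at h
  rw [← h]
  have : s.card - 1 = 0 ↔ s.card = 1 := by
    have := hs.card_pos; omega
  simp [this]

lemma sum_v (hvs : Set.InjOn v s) (h2 : 2 ≤ s.card) :
    ∑ i ∈ s, v i * ∏ j ∈ s.erase i, (v i - v j)⁻¹ = if s.card = 2 then 1 else 0 := by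
  have hX : (X : F[X]) = Lagrange.interpolate s v v := by
    refine Lagrange.eq_interpolate_of_eval_eq _ hvs ?_ (fun i _ => by simp)
    rw [Polynomial.degree_X]
    exact_mod_cast by exact_mod_cast (by exact_mod_cast h2 : (2 : ℕ) ≤ s.card).trans_lt' one_lt_two
  have h := coeff_interp hvs v
  rw [← hX, Polynomial.coeff_X] at h
  rw [← h]
  have : 1 = s.card - 1 ↔ s.card = 2 := by omega
  simp [this]

end aux

/-- for distinct `z_1,...,z_n`, the upper-triangular matrix `C` with
`C a b = ∏_{c<a} (z_b - z_c)` (for `a ≤ b`) is invertible, with inverse given by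
`(C⁻¹) a b = ∏_{c ≤ b, c ≠ a} (z_a - z_c)⁻¹` (for `a ≤ b`), and
`C Z C⁻¹ = Z + Ẑ` where `Z = diag(z)` and `Ẑ` is the shift matrix. -/
theorem stmt_14 (n : ℕ) (z : Fin n → ℂ) (hz : Function.Injective z)
    (C Ci : Matrix (Fin n) (Fin n) ℂ)
    (hC : ∀ a b, C a b = if a ≤ b then ∏ c ∈ Finset.Iio a, (z b - z c) else 0)
    (hCi : ∀ a b, Ci a b = if a ≤ b then ∏ c ∈ (Finset.Iic b).erase a, (z a - z c)⁻¹ else 0) :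
    C * Ci = 1 ∧ Ci * C = 1 ∧
      C * Matrix.diagonal z * Ci
        = Matrix.diagonal z
            + Matrix.of (fun a b : Fin n => if (a : ℕ) + 1 = (b : ℕ) then 1 else 0) := by
  -- key product computation
  have key : ∀ a b k : Fin n, k ∈ Finset.Icc a b →
      C a k * Ci k b = ∏ c ∈ (Finset.Icc a b).erase k, (z k - z c)⁻¹ := by
    intro a b k hk
    rw [Finset.mem_Icc] at hk
    obtain ⟨hak, hkb⟩ := hk
    rw [hC, hCi, if_pos hak, if_pos hkb]
    have hsplit : (Finset.Iic b).erase k = Finset.Iio a ∪ (Finset.Icc a b).erase k := by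
      ext c
      simp only [Finset.mem_erase, Finset.mem_Iic, Finset.mem_Iio, Finset.mem_union,
        Finset.mem_Icc, ← Fin.val_eq_val, Fin.le_def, Fin.lt_def, ne_eq]
      omega
    have hdisj : Disjoint (Finset.Iio a) ((Finset.Icc a b).erase k) := by
      rw [Finset.disjoint_left]
      intro c hc hc'
      rw [Finset.mem_Iio] at hc
      rw [Finset.mem_erase, Finset.mem_Icc] at hc'
      exact absurd hc'.2.1 (not_le.mpr hc)
    rw [hsplit, Finset.prod_union hdisj, ← mul_assoc, ← Finset.prod_mul_distrib]
    have : ∏ c ∈ Finset.Iio a, (z k - z c) * (z k - z c)⁻¹ = 1 := by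
      refine Finset.prod_eq_one fun c hc => ?_
      rw [Finset.mem_Iio] at hc
      refine mul_inv_cancel₀ (sub_ne_zero.mpr (hz.ne ?_))
      exact (hc.trans_le hak).ne'
    rw [this, one_mul]
  have vanish : ∀ a b k : Fin n, k ∉ Finset.Icc a b → C a k * Ci k b = 0 := by
    intro a b k hk
    rw [Finset.mem_Icc, not_and_or] at hk
    rcases hk with h | h
    · rw [hC, if_neg h, zero_mul]
    · rw [hCi, if_neg h, mul_zero]
  have hinj : ∀ a b : Fin n, Set.InjOn z (Finset.Icc a b) := fun _ _ => hz.injOn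
  -- first part
  have h1 : C * Ci = 1 := by
    ext a b
    rw [Matrix.mul_apply]
    rw [← Finset.sum_subset (Finset.subset_univ (Finset.Icc a b))
      (fun k _ hk => vanish a b k hk)]
    by_cases hab : a ≤ b
    · rw [Finset.sum_congr rfl (key a b), sum_one (hinj a b) (Finset.nonempty_Icc.mpr hab)]
      rw [Fin.card_Icc]
      have hval : (a:ℕ) ≤ b := hab
      rcases eq_or_ne a b with rfl | hne
      · simp
      · have : (b:ℕ) + 1 - a ≠ 1 := by
          have : (a:ℕ) ≠ b := fun h => hne (Fin.val_eq_val a b |>.mp h)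
          omega
        rw [if_neg this, Matrix.one_apply_ne hne]
    · have : Finset.Icc a b = ∅ := Finset.Icc_eq_empty hab
      rw [this, Finset.sum_empty, Matrix.one_apply_ne (fun h => hab (le_of_eq h))]
  refine ⟨h1, (mul_eq_one_comm).mp h1, ?_⟩
  -- third part
  ext a b
  rw [Matrix.mul_apply]
  have hterm : ∀ k, (C * Matrix.diagonal z) a k * Ci k b = z k * (C a k * Ci k b) := by
    intro k
    rw [Matrix.mul_diagonal]
    ring
  simp only [hterm]
  rw [← Finset.sum_subset (Finset.subset_univ (Finset.Icc a b))
    (fun k _ hk => by rw [vanish a b k hk, mul_zero])]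
  rw [Finset.sum_congr rfl (fun k hk => by rw [key a b k hk])]
  by_cases hab : a ≤ b
  · rcases eq_or_ne a b with rfl | hne
    · rw [Finset.Icc_self, Finset.sum_singleton, Finset.erase_singleton, Finset.prod_empty,
        mul_one]
      simp [Matrix.diagonal_apply_eq]
    · have hlt : (a:ℕ) < b := lt_of_le_of_ne hab (fun h => hne (Fin.val_eq_val a b |>.mp h))
      have h2 : 2 ≤ (Finset.Icc a b).card := by rw [Fin.card_Icc]; omega
      rw [sum_v (hinj a b) h2, Fin.card_Icc]
      have hcard : (b:ℕ) + 1 - a = 2 ↔ (a:ℕ) + 1 = b := by omega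
      simp only [Matrix.add_apply, Matrix.diagonal_apply_ne _ hne, Matrix.of_apply, zero_add]
      rw [if_congr hcard rfl rfl]
  · have : Finset.Icc a b = ∅ := Finset.Icc_eq_empty hab
    rw [this, Finset.sum_empty]
    have hne : a ≠ b := fun h => hab (le_of_eq h)
    have : ¬ ((a:ℕ) + 1 = b) := by
      have : ¬ ((a:ℕ) ≤ b) := hab
      omega
    simp [Matrix.diagonal_apply_ne _ hne, this]
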